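/- Converse Steinhaus–Weil theorem: let G be a Polish group whose topology is induced by a right-invariant metric d, and let μ be a Borel probability measure on G, inner regular by compact sets and outer regular by open sets. Then the following are equivalent: (a) μ has the Steinhaus–Weil property, i.e. for every μ-measurable A with μ(A) > 0, 1_G is an interior point of AA⁻¹; (b) for every compact K with μ(K) > 0 the map t ↦ μ(tK) is subcontinuous at 1_G, i.e. every sequence t_n → 1_G has a subsequence t_{m(n)} with inf_n μ(t_{m(n)}K) > 0; (c) for no compact K with μ(K) > 0 does there exist a sequence t_n → 1_G with μ(t_nK) → 0. -/

import Mathlib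

open Set Topology TopologicalSpace MeasureTheory Filter Pointwise

section SWaux

variable {G : Type*} [Group G] [MetricSpace G] [IsTopologicalGroup G]
  [MeasurableSpace G] [BorelSpace G]

private lemma sw_mem_mul_inv {t : G} {K : Set G} (h : ¬ Disjoint ((t * ·) '' K) K) :
    t ∈ K * K⁻¹ := by
  rw [Set.not_disjoint_iff] at h
  obtain ⟨x, ⟨b, hb, rfl⟩, hxK⟩ := h
  exact ⟨t * b, hxK, b⁻¹, Set.inv_mem_inv.mpr hb, by group⟩

/-- (b) → (a) : Steinhaus–Weil from subcontinuity. -/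
private lemma sw_b_to_a (hd : ∀ x y z : G, dist (x * z) (y * z) = dist x y)
    (μ : Measure G) [IsProbabilityMeasure μ] [μ.InnerRegular] [μ.OuterRegular]
    (hb : ∀ K : Set G, IsCompact K → 0 < μ K →
        ∀ t : ℕ → G, Tendsto t atTop (nhds 1) →
          ∃ m : ℕ → ℕ, StrictMono m ∧ 0 < ⨅ n, μ ((t (m n) * ·) '' K))
    (A : Set G) (hA : NullMeasurableSet A μ) (hA0 : 0 < μ A) :
    (1 : G) ∈ interior (A * A⁻¹) := by
  obtain ⟨S, hSA, hSm, hSae⟩ := hA.exists_measurable_subset_ae_eq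
  have hS0 : 0 < μ S := by rwa [measure_congr hSae]
  obtain ⟨K, hKS, hK, hK0⟩ := hSm.exists_lt_isCompact hS0
  have hKA : K ⊆ A := hKS.trans hSA
  suffices h : (1 : G) ∈ interior (K * K⁻¹) by
    exact interior_mono (Set.mul_subset_mul hKA (Set.inv_subset_inv.mpr hKA)) h
  by_contra hni
  have hex : ∀ n : ℕ, ∃ s : G, dist s 1 < 1 / (n + 1) ∧ s ∉ K * K⁻¹ := by
    intro n
    by_contra hcon
    push_neg at hcon
    refine hni (mem_interior.mpr ⟨Metric.ball 1 (1 / (n + 1)), ?_, Metric.isOpen_ball, ?_⟩)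
    · intro x hx
      exact hcon x (by simpa [Metric.mem_ball] using hx)
    · exact Metric.mem_ball_self (by positivity)
  choose t ht htK using hex
  have htend : Tendsto t atTop (nhds (1 : G)) := by
    rw [Metric.tendsto_atTop]
    intro ε hε
    obtain ⟨N, hN⟩ := exists_nat_one_div_lt hε
    refine ⟨N, fun n hn => lt_of_lt_of_le (lt_of_lt_of_le (ht n) ?_) hN.le⟩
    exact one_div_le_one_div_of_le (by positivity)
      (by exact_mod_cast Nat.succ_le_succ hn)
  obtain ⟨m, hm, hc⟩ := hb K hK hK0 t htend
  set c := ⨅ n, μ ((t (m n) * ·) '' K) with hcdef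
  obtain ⟨U, hKU, hUo, hU⟩ := Set.exists_isOpen_lt_add K (measure_ne_top μ K) hc.ne'
  obtain ⟨δ, hδ, hδU⟩ := hK.exists_thickening_subset_open hUo hKU
  obtain ⟨N, hN⟩ := Metric.tendsto_atTop.mp (htend.comp hm.tendsto_atTop) δ hδ
  have hdist : dist (t (m N)) 1 < δ := hN N le_rfl
  set s := t (m N) with hsdef
  have hsub : (s * ·) '' K ⊆ U := by
    rintro x ⟨k, hk, rfl⟩
    apply hδU
    rw [Metric.mem_thickening_iff]
    refine ⟨k, hk, ?_⟩
    have := hd s 1 k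
    rw [one_mul] at this
    simpa [this] using hdist
  have hdisj : Disjoint ((s * ·) '' K) K := by
    by_contra h
    exact htK (m N) (sw_mem_mul_inv h)
  have hle : μ K + c ≤ μ U := by
    have h1 : μ K + c ≤ μ K + μ ((s * ·) '' K) := add_le_add_right (iInf_le _ N) _
    have h2 : μ K + μ ((s * ·) '' K) = μ (((s * ·) '' K) ∪ K) := by
      rw [measure_union hdisj hK.measurableSet, add_comm]
    exact (h1.trans_eq h2).trans (measure_mono (Set.union_subset hsub hKU))
  exact absurd (hU.trans_le hle) (lt_irrefl _)

/-- (a) → (c). -/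
private lemma sw_a_to_c
    (μ : Measure G) [IsProbabilityMeasure μ]
    (ha : ∀ A : Set G, NullMeasurableSet A μ → 0 < μ A →
        (1 : G) ∈ interior (A * A⁻¹)) :
    ∀ K : Set G, IsCompact K → 0 < μ K →
      ¬ ∃ t : ℕ → G, Tendsto t atTop (nhds 1) ∧
        Tendsto (fun n => μ ((t n * ·) '' K)) atTop (nhds 0) := by
  rintro K hK hK0 ⟨t, ht1, ht0⟩
  have hP : ∀ n : ℕ, ∀ᶠ k in atTop, μ ((t k * ·) '' K) < μ K * 2⁻¹ ^ (n + 2) := by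
    intro n
    have hpos : (0 : ENNReal) < μ K * 2⁻¹ ^ (n + 2) := by
      refine ENNReal.mul_pos hK0.ne' ?_
      exact (ENNReal.pow_pos (ENNReal.inv_pos.mpr ENNReal.ofNat_ne_top) _).ne'
    exact ht0.eventually_lt_const hpos
  obtain ⟨m, hm, hmlt⟩ := extraction_forall_of_eventually hP
  set B := K \ ⋃ n, (t (m n) * ·) '' K with hB
  have hBm : MeasurableSet B :=
    hK.measurableSet.diff
      (.iUnion fun n => (hK.image (continuous_mul_left _)).measurableSet)
  have hgeo : ∑' n : ℕ, (2 : ENNReal)⁻¹ ^ (n + 2) = 2⁻¹ := by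
    simp_rw [pow_add]
    rw [ENNReal.tsum_mul_right, ENNReal.tsum_geometric, ENNReal.one_sub_inv_two, inv_inv]
    rw [pow_two, ← mul_assoc, ENNReal.mul_inv_cancel two_ne_zero ENNReal.ofNat_ne_top, one_mul]
  have hsum : ∑' n, μ ((t (m n) * ·) '' K) < μ K := by
    calc ∑' n, μ ((t (m n) * ·) '' K)
        ≤ ∑' n : ℕ, μ K * 2⁻¹ ^ (n + 2) := ENNReal.tsum_le_tsum fun n => (hmlt n).le
      _ = μ K * 2⁻¹ := by rw [ENNReal.tsum_mul_left, hgeo]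
      _ < μ K := by
          rw [← div_eq_mul_inv]
          exact ENNReal.half_lt_self hK0.ne' (measure_ne_top μ K)
  have hB0 : 0 < μ B := by
    rcases (zero_le : 0 ≤ μ B).lt_or_eq with h | h
    · exact h
    · exfalso
      have hcover : K ⊆ B ∪ ⋃ n, (t (m n) * ·) '' K := by
        intro x hx
        by_cases hx' : x ∈ ⋃ n, (t (m n) * ·) '' K
        · exact Or.inr hx'
        · exact Or.inl ⟨hx, hx'⟩
      have : μ K ≤ μ B + ∑' n, μ ((t (m n) * ·) '' K) :=
        (measure_mono hcover).trans ((measure_union_le _ _).trans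
          (add_le_add_right (measure_iUnion_le _) _))
      rw [← h, zero_add] at this
      exact absurd this (not_le.mpr hsum)
  have hmem := ha B hBm.nullMeasurableSet hB0
  obtain ⟨n, hn⟩ :=
    ((ht1.comp hm.tendsto_atTop).eventually (isOpen_interior.mem_nhds hmem)).exists
  obtain ⟨a, haB, b, hbB, hab⟩ := interior_subset hn
  have hbB' : b⁻¹ ∈ B := Set.mem_inv.mp hbB
  have haimg : a ∈ (t (m n) * ·) '' K := by
    refine ⟨b⁻¹, hbB'.1, ?_⟩
    rw [show t (m n) = a * b from hab.symm]
    group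
  exact haB.2 (Set.mem_iUnion.mpr ⟨n, haimg⟩)

/-- (c) → (b). -/
private lemma sw_c_to_b
    (μ : Measure G)
    (hc : ∀ K : Set G, IsCompact K → 0 < μ K →
      ¬ ∃ t : ℕ → G, Tendsto t atTop (nhds 1) ∧
        Tendsto (fun n => μ ((t n * ·) '' K)) atTop (nhds 0)) :
    ∀ K : Set G, IsCompact K → 0 < μ K →
      ∀ t : ℕ → G, Tendsto t atTop (nhds 1) →
        ∃ m : ℕ → ℕ, StrictMono m ∧ 0 < ⨅ n, μ ((t (m n) * ·) '' K) := by
  intro K hK hK0 t ht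
  by_cases h : ∃ k : ℕ, 0 < ⨅ n, μ ((t (n + k) * ·) '' K)
  · obtain ⟨k, hk⟩ := h
    exact ⟨fun n => n + k, fun a b hab => add_lt_add_left hab k, hk⟩
  · push_neg at h
    have h0 : ∀ k : ℕ, (⨅ n, μ ((t (n + k) * ·) '' K)) = 0 := fun k =>
      le_antisymm (h k) zero_le
    have hfreq : ∀ n : ℕ, ∃ᶠ k in atTop, μ ((t k * ·) '' K) < 2⁻¹ ^ n := by
      intro n
      rw [frequently_atTop]
      intro N
      have hlt : (⨅ j, μ ((t (j + N) * ·) '' K)) < 2⁻¹ ^ n := by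
        rw [h0 N]
        exact ENNReal.pow_pos (ENNReal.inv_pos.mpr ENNReal.ofNat_ne_top) _
      obtain ⟨j, hj⟩ := iInf_lt_iff.mp hlt
      exact ⟨j + N, Nat.le_add_left N j, hj⟩
    obtain ⟨m, hm, hlt⟩ := extraction_forall_of_frequently hfreq
    exfalso
    apply hc K hK hK0
    refine ⟨t ∘ m, ht.comp hm.tendsto_atTop, ?_⟩
    refine tendsto_of_tendsto_of_tendsto_of_le_of_le tendsto_const_nhds
      (ENNReal.tendsto_pow_atTop_nhds_zero_of_lt_one (ENNReal.inv_lt_one.mpr ENNReal.one_lt_two))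
      (fun n => zero_le) (fun n => (hlt n).le)

end SWaux

/-- Converse Steinhaus–Weil theorem: for a regular Borel probability measure
`μ` on a Polish group `G` with right-invariant metric, the following are
equivalent: (a) `μ` has the Steinhaus–Weil property; (b) for every compact
`K` of positive measure the map `t ↦ μ(tK)` is subcontinuous at `1`; (c) for
no compact `K` of positive measure is there a null sequence `t_n → 1` with
`μ(t_nK) → 0`. -/
theorem stmt_15 {G : Type*} [Group G] [MetricSpace G] [IsTopologicalGroup G]
    [SeparableSpace G] [CompleteSpace G] [MeasurableSpace G] [BorelSpace G]
    (hd : ∀ x y z : G, dist (x * z) (y * z) = dist x y)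
    (μ : Measure G) [IsProbabilityMeasure μ] [μ.InnerRegular] [μ.OuterRegular] :
    ((∀ A : Set G, NullMeasurableSet A μ → 0 < μ A →
        (1 : G) ∈ interior (A * A⁻¹)) ↔
      (∀ K : Set G, IsCompact K → 0 < μ K →
        ∀ t : ℕ → G, Tendsto t atTop (nhds 1) →
          ∃ m : ℕ → ℕ, StrictMono m ∧ 0 < ⨅ n, μ ((t (m n) * ·) '' K))) ∧
    ((∀ K : Set G, IsCompact K → 0 < μ K →
        ∀ t : ℕ → G, Tendsto t atTop (nhds 1) →
          ∃ m : ℕ → ℕ, StrictMono m ∧ 0 < ⨅ n, μ ((t (m n) * ·) '' K)) ↔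
      (∀ K : Set G, IsCompact K → 0 < μ K →
        ¬ ∃ t : ℕ → G, Tendsto t atTop (nhds 1) ∧
          Tendsto (fun n => μ ((t n * ·) '' K)) atTop (nhds 0))) := by
  have hbc : ∀ _hb : (∀ K : Set G, IsCompact K → 0 < μ K →
        ∀ t : ℕ → G, Tendsto t atTop (nhds 1) →
          ∃ m : ℕ → ℕ, StrictMono m ∧ 0 < ⨅ n, μ ((t (m n) * ·) '' K)),
      (∀ K : Set G, IsCompact K → 0 < μ K →
        ¬ ∃ t : ℕ → G, Tendsto t atTop (nhds 1) ∧
          Tendsto (fun n => μ ((t n * ·) '' K)) atTop (nhds 0)) := by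
    rintro hb K hK hK0 ⟨t, ht1, ht0⟩
    obtain ⟨m, hm, hpos⟩ := hb K hK hK0 t ht1
    have h0 : Tendsto (fun n => μ ((t (m n) * ·) '' K)) atTop (nhds 0) :=
      ht0.comp hm.tendsto_atTop
    obtain ⟨n, hn⟩ := (h0.eventually_lt_const hpos).exists
    exact absurd (iInf_le (fun n => μ ((t (m n) * ·) '' K)) n) (not_le.mpr hn)
  constructor
  · constructor
    · intro ha
      exact sw_c_to_b μ (sw_a_to_c μ ha)
    · intro hb
      exact sw_b_to_a hd μ hb
  · exact ⟨hbc, sw_c_to_b μ⟩
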